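/- Let M ≥ 1 be an integer, λ > 1 and 0 < ε < 1 with ε < λ−1 and λ(1−ε)/(1+ε) > 1. Let S be an (M,λ,ε,W_N)-minimizing set and [u] ∈ S. Then for a conjugacy class [u'] ≠ [u], the following are equivalent: (1) [u'] ∈ S; (2) there exist Whitehead moves τ_1, …, τ_k ∈ W_N with k ≤ M such that τ_k···τ_1([u]) = [u'] and, setting [u_0] = [u] and [u_i] = τ_i···τ_1([u]), one has ‖u_{i+1}‖_A ≤ (1+ε)‖u_i‖_A for all i < k. -/
import Mathlib


/-- `(M,λ,ε,W_N)`-minimizing set, in the abstract model where `G = Out(F_N)`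
acts on the set `C` of conjugacy classes, `len = ‖·‖_A`, and `W ⊆ G` is the
set of nontrivial Whitehead moves. -/
def IsWMinimizingSet {G C : Type*} [Group G] [MulAction G C] (W : Set G)
    (len : C → ℕ) (M : ℕ) (lam eps : ℝ) (S : Finset C) : Prop :=
  (∀ u ∈ S, 0 < len u) ∧
  S.card ≤ M ∧
  (∀ u ∈ S, ∀ u' ∈ S, ∃ φ : G, φ • u = u') ∧
  (∀ u ∈ S, ∀ u' ∈ S,
      (1 - eps) * (len u : ℝ) ≤ (len u' : ℝ) ∧ (len u' : ℝ) ≤ (1 + eps) * (len u : ℝ)) ∧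
  (∀ u ∈ S, ∀ τ ∈ W, τ • u ∉ S → lam * (len u : ℝ) ≤ (len (τ • u) : ℝ))

/-- for an `(M,λ,ε,W_N)`-minimizing set `S` (with `0<ε<1`,
`ε<λ-1`, `λ(1-ε)/(1+ε)>1`), `[u] ∈ S` and `[u'] ≠ [u]`, we have `[u'] ∈ S` if
and only if `[u']` is reachable from `[u]` by a chain of at most `M` Whitehead
moves each of which stretches the length by a factor at most `1+ε`.  Peak
reduction is assumed as the hypothesis `hpeak`. -/
theorem stmt6 {G C : Type*} [Group G] [MulAction G C] (W : Set G)
    (len : C → ℕ) (M : ℕ) (lam eps : ℝ)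
    (hM : 1 ≤ M) (hlam : 1 < lam) (heps0 : 0 < eps) (heps1 : eps < 1)
    (heps : eps < lam - 1) (hratio : 1 < lam * (1 - eps) / (1 + eps))
    (hpeak : ∀ (w : C) (φ : G),
      ∃ (k : ℕ) (c : ℕ → C), c 0 = w ∧ c k = φ • w ∧
        (∀ i < k, ∃ τ ∈ W, τ • c i = c (i + 1)) ∧
        (∀ i ≤ k, len (c i) ≤ max (len w) (len (φ • w))))
    (S : Finset C) (hS : IsWMinimizingSet W len M lam eps S)
    (u : C) (hu : u ∈ S) (u' : C) (hne : u' ≠ u) :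
    u' ∈ S ↔
      ∃ k ≤ M, ∃ c : ℕ → C, c 0 = u ∧ c k = u' ∧
        (∀ i < k, ∃ τ ∈ W, τ • c i = c (i + 1)) ∧
        (∀ i < k, (len (c (i + 1)) : ℝ) ≤ (1 + eps) * (len (c i) : ℝ)) := by
  obtain ⟨hpos, hcard, htrans, hrat, hstretch⟩ := hS
  have heps1' : (0:ℝ) < 1 + eps := by linarith
  have hA : 1 + eps < lam * (1 - eps) := by
    rw [lt_div_iff₀ heps1'] at hratio; linarith
  constructor
  · intro hu'
    obtain ⟨φ, hφ⟩ := htrans u hu u' hu'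
    obtain ⟨k, c, hc0, hck, hedge, hlen⟩ := hpeak u φ
    rw [hφ] at hck hlen
    have hmax : ∀ i ≤ k, (len (c i) : ℝ) ≤ (1 + eps) * (len u : ℝ) := by
      intro i hi
      have h1 : (len (c i) : ℝ) ≤ max (len u : ℝ) (len u' : ℝ) := by
        have := hlen i hi
        have : (len (c i) : ℝ) ≤ ((max (len u) (len u') : ℕ) : ℝ) := by exact_mod_cast this
        simpa [Nat.cast_max] using this
      have h2 : (len u' : ℝ) ≤ (1 + eps) * (len u : ℝ) := (hrat u hu u' hu').2
      have h3 : (len u : ℝ) ≤ (1 + eps) * (len u : ℝ) := by nlinarith [Nat.cast_nonneg (α := ℝ) (len u)]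
      exact h1.trans (max_le h3 h2)
    have hin : ∀ i ≤ k, c i ∈ S := by
      intro i hi
      induction i with
      | zero => rw [hc0]; exact hu
      | succ n ih =>
        have hn : n ≤ k := Nat.le_of_succ_le hi
        have hnS := ih hn
        obtain ⟨τ, hτW, hτ⟩ := hedge n (Nat.lt_of_succ_le hi)
        by_contra hcon
        rw [← hτ] at hcon
        have h1 := hstretch (c n) hnS τ hτW hcon
        have h2 : (len (τ • c n) : ℝ) ≤ (1 + eps) * (len u : ℝ) := by
          rw [hτ]; exact hmax (n+1) hi
        have h3 : (1 - eps) * (len u : ℝ) ≤ (len (c n) : ℝ) := (hrat u hu (c n) hnS).1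
        have hupos : (0:ℝ) < (len u : ℝ) := by exact_mod_cast hpos u hu
        nlinarith [hupos]
    -- shorten the chain to length ≤ M
    clear hmax hlen hφ
    induction k using Nat.strong_induction_on generalizing c with
    | _ k IH =>
      by_cases hkM : k ≤ M
      · exact ⟨k, hkM, c, hc0, hck, hedge, fun i hi =>
          (hrat (c i) (hin i hi.le) (c (i+1)) (hin (i+1) hi)).2⟩
      · push_neg at hkM
        obtain ⟨i, hi, j, hj, hij, hcij⟩ :=
          Finset.exists_ne_map_eq_of_card_lt_of_maps_to
            (s := Finset.range (k+1)) (t := S)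
            (by simp; omega) (fun a ha => hin a (by simpa using Nat.lt_succ_iff.mp (Finset.mem_range.mp ha)))
        simp only [Finset.mem_range, Nat.lt_succ_iff] at hi hj
        -- wlog i < j
        rcases lt_or_gt_of_ne hij with hlt | hgt
        case _ =>
          exact (fun i j (hi : i ≤ k) (hj : j ≤ k) (hlt : i < j) (hcij : c i = c j) => by
            set d : ℕ → C := fun n => if n < i then c n else c (n + (j - i)) with hd
            have hm : i + (k - j) < k := by omega
            refine IH (i + (k - j)) hm d ?_ ?_ ?_ ?_
            · by_cases h0 : 0 < i
              · simpa [hd, h0] using hc0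
              · have hi0 : i = 0 := by omega
                simp only [hd, hi0]
                simp only [Nat.lt_irrefl, if_false, Nat.zero_add, Nat.sub_zero] at *
                rw [← hcij]; subst hi0; simpa using hc0
            · have : ¬ (i + (k - j) < i) := by omega
              simp only [hd, this, if_false]
              have : i + (k - j) + (j - i) = k := by omega
              rw [this, hck]
            · intro n hn
              by_cases hni : n < i
              · obtain ⟨τ, hτW, hτ⟩ := hedge n (by omega)
                refine ⟨τ, hτW, ?_⟩
                by_cases hni' : n + 1 < i
                · simpa [hd, hni, hni'] using hτ
                · have hn1 : n + 1 = i := by omega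
                  have : n + 1 + (j - i) = j := by omega
                  simp only [hd, hni, hni', if_true, if_false, this]
                  rw [← hcij, ← hn1]; exact hτ
              · obtain ⟨τ, hτW, hτ⟩ := hedge (n + (j - i)) (by omega)
                refine ⟨τ, hτW, ?_⟩
                have h1 : ¬ (n + 1 < i) := by omega
                have h2 : n + 1 + (j - i) = n + (j - i) + 1 := by omega
                simp only [hd, hni, h1, if_false, h2]
                exact hτ
            · intro n hn
              by_cases hni : n < i
              · simp only [hd, hni, if_true]
                exact hin n (by omega)
              · simp only [hd, hni, if_false]
                exact hin (n + (j - i)) (by omega)) i j hi hj hlt hcij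
        case _ =>
          exact (fun i j (hi : i ≤ k) (hj : j ≤ k) (hlt : i < j) (hcij : c i = c j) => by
            set d : ℕ → C := fun n => if n < i then c n else c (n + (j - i)) with hd
            have hm : i + (k - j) < k := by omega
            refine IH (i + (k - j)) hm d ?_ ?_ ?_ ?_
            · by_cases h0 : 0 < i
              · simpa [hd, h0] using hc0
              · have hi0 : i = 0 := by omega
                simp only [hd, hi0]
                simp only [Nat.lt_irrefl, if_false, Nat.zero_add, Nat.sub_zero] at *
                rw [← hcij]; subst hi0; simpa using hc0
            · have : ¬ (i + (k - j) < i) := by omega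
              simp only [hd, this, if_false]
              have : i + (k - j) + (j - i) = k := by omega
              rw [this, hck]
            · intro n hn
              by_cases hni : n < i
              · obtain ⟨τ, hτW, hτ⟩ := hedge n (by omega)
                refine ⟨τ, hτW, ?_⟩
                by_cases hni' : n + 1 < i
                · simpa [hd, hni, hni'] using hτ
                · have hn1 : n + 1 = i := by omega
                  have : n + 1 + (j - i) = j := by omega
                  simp only [hd, hni, hni', if_true, if_false, this]
                  rw [← hcij, ← hn1]; exact hτ
              · obtain ⟨τ, hτW, hτ⟩ := hedge (n + (j - i)) (by omega)
                refine ⟨τ, hτW, ?_⟩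
                have h1 : ¬ (n + 1 < i) := by omega
                have h2 : n + 1 + (j - i) = n + (j - i) + 1 := by omega
                simp only [hd, hni, h1, if_false, h2]
                exact hτ
            · intro n hn
              by_cases hni : n < i
              · simp only [hd, hni, if_true]
                exact hin n (by omega)
              · simp only [hd, hni, if_false]
                exact hin (n + (j - i)) (by omega)) j i hj hi hgt hcij.symm
  · rintro ⟨k, hkM, c, hc0, hck, hedge, hstep⟩
    have hin : ∀ i ≤ k, c i ∈ S := by
      intro i hi
      induction i with
      | zero => rw [hc0]; exact hu
      | succ n ih =>
        have hn : n ≤ k := Nat.le_of_succ_le hi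
        have hnS := ih hn
        obtain ⟨τ, hτW, hτ⟩ := hedge n (Nat.lt_of_succ_le hi)
        by_contra hcon
        rw [← hτ] at hcon
        have h1 := hstretch (c n) hnS τ hτW hcon
        have h2 : (len (c (n+1)) : ℝ) ≤ (1 + eps) * (len (c n) : ℝ) := hstep n (Nat.lt_of_succ_le hi)
        rw [hτ] at h1
        have hnpos : (0:ℝ) < (len (c n) : ℝ) := by exact_mod_cast hpos (c n) hnS
        nlinarith
    rw [← hck]; exact hin k le_rfl
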